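/- Let (Ω, μ) be a probability space and X : ℕ → Ω → ℝ an i.i.d. sequence with μ(X_i = Δ_H) = p−ε and μ(X_i = −Δ_T) = q+ε (the not-heavy-coin log-likelihood increments). Let S_n = Σ_{i<n} X_i, fix B > 0, and let τ = inf{n ≥ 1 : S_n ≥ B or S_n < 0}. Then the expected number of steps to absorption satisfies E[τ] ≤ 2·(Δ_H+Δ_T) / (Δ_T·(q+ε) − Δ_H·(p−ε)). -/

import Mathlib

open MeasureTheory ProbabilityTheory

open Classical in
lemma aux_tsum_if (m : ℕ) : ∑' n : ℕ, (if n < m then (1:ENNReal) else 0) = m := by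
  rw [tsum_eq_sum (s := Finset.range m) (by intro n hn; simp [Finset.mem_range] at hn; simp [hn])]
  rw [Finset.sum_congr rfl (fun n hn => if_pos (Finset.mem_range.mp hn))]
  simp

open Classical in
lemma aux_sum_if (A : ℕ → Prop) (hA : ∀ n, A (n+1) → A n) (x : ℕ → ℝ) (N : ℕ) :
    ∃ m ≤ N, (∀ n < m, A n) ∧
      (∑ n ∈ Finset.range N, (if A n then x n else 0)) = ∑ n ∈ Finset.range m, x n := by
  have Adown : ∀ i j, i ≤ j → A j → A i := by
    intro i j hij
    induction j with
    | zero => simpa [Nat.le_zero.mp hij]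
    | succ j ihj =>
      intro hAj
      rcases Nat.lt_or_ge i (j+1) with h | h
      · exact ihj (Nat.lt_succ_iff.mp h) (hA j hAj)
      · have : i = j + 1 := le_antisymm hij h
        simpa [this] using hAj
  suffices h : ∃ m ≤ N, (∀ n < m, A n) ∧ (m = N ∨ ¬ A m) ∧
      (∑ n ∈ Finset.range N, (if A n then x n else 0)) = ∑ n ∈ Finset.range m, x n by
    obtain ⟨m, h1, h2, _, h4⟩ := h; exact ⟨m, h1, h2, h4⟩
  induction N with
  | zero => exact ⟨0, le_refl _, by simp, Or.inl rfl, by simp⟩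
  | succ N ih =>
    obtain ⟨m, hmN, hall, hcase, hsum⟩ := ih
    rcases hcase with rfl | hnA
    · by_cases hAN : A m
      · refine ⟨m+1, le_refl _, ?_, Or.inl rfl, ?_⟩
        · intro n hn
          rcases Nat.lt_or_ge n m with h | h
          · exact hall n h
          · have : n = m := le_antisymm (Nat.lt_succ_iff.mp hn) h
            simpa [this] using hAN
        · rw [Finset.sum_range_succ, Finset.sum_range_succ, hsum, if_pos hAN]
      · exact ⟨m, Nat.le_succ _, hall, Or.inr hAN,
          by rw [Finset.sum_range_succ, hsum, if_neg hAN, add_zero]⟩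
    · have hAN : ¬ A N := fun h => hnA (Adown m N hmN h)
      exact ⟨m, le_trans hmN (Nat.le_succ _), hall, Or.inr hnA,
        by rw [Finset.sum_range_succ, hsum, if_neg hAN, add_zero]⟩

set_option maxHeartbeats 1000000 in
open Classical in
/-- For the not-heavy-coin log-likelihood random walk (i.i.d. steps `+Δ_H` w.p. `p−ε`,
`−Δ_T` w.p. `q+ε`) with absorbing barriers at `B > 0` above and at every state below `0`,
the expected number of steps to absorption is at most
`2(Δ_H+Δ_T)/(Δ_T(q+ε) − Δ_H(p−ε))`. -/
theorem notheavy_expected_absorption_time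
    (ε p : ℝ) (hε : ε ∈ Set.Ioo (0:ℝ) (1/2)) (hp : p ∈ Set.Ioo ε (1 - ε))
    (q ΔH ΔT : ℝ) (hq : q = 1 - p)
    (hΔH : ΔH = Real.log ((p + ε) / (p - ε)))
    (hΔT : ΔT = Real.log ((q + ε) / (q - ε)))
    {Ω : Type*} [MeasurableSpace Ω] (P : Measure Ω) [IsProbabilityMeasure P]
    (X : ℕ → Ω → ℝ) (hXmeas : ∀ i, Measurable (X i))
    (hXindep : iIndepFun X P)
    (hXup : ∀ i, P {ω | X i ω = ΔH} = ENNReal.ofReal (p - ε))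
    (hXdown : ∀ i, P {ω | X i ω = -ΔT} = ENNReal.ofReal (q + ε))
    (B : ℝ) (hB : 0 < B)
    (S : ℕ → Ω → ℝ) (hS : ∀ n ω, S n ω = ∑ i ∈ Finset.range n, X i ω)
    (hit : Ω → Set ℕ)
    (hhit : ∀ ω, hit ω = {n : ℕ | 1 ≤ n ∧ (B ≤ S n ω ∨ S n ω < 0)}) :
    (∫⁻ ω, (if (hit ω).Nonempty then ((sInf (hit ω) : ℕ) : ENNReal) else ⊤) ∂P)
      ≤ ENNReal.ofReal (2 * (ΔH + ΔT) / (ΔT * (q + ε) - ΔH * (p - ε))) := by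
  obtain ⟨hε0, hε2⟩ := hε
  obtain ⟨hpl, hpu⟩ := hp
  set a := p - ε with ha_def
  set b := q + ε with hb_def
  have ha : 0 < a := by rw [ha_def]; linarith
  have hb : 0 < b := by rw [hb_def, hq]; linarith
  have hab : a + b = 1 := by rw [ha_def, hb_def, hq]; ring
  have ha' : 0 < p + ε := by linarith
  have hb' : 0 < q - ε := by rw [hq]; linarith
  have hΔHpos : 0 < ΔH := by
    rw [hΔH]; apply Real.log_pos
    rw [lt_div_iff₀ ha]; linarith
  have hΔTpos : 0 < ΔT := by
    rw [hΔT]; apply Real.log_pos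
    rw [lt_div_iff₀ hb']; rw [hb_def]; linarith
  set d := ΔT * b - ΔH * a with hd_def
  -- positivity of the drift
  have hΔH_eq : ΔH = Real.log (p + ε) - Real.log a := by
    rw [hΔH, Real.log_div (ne_of_gt ha') (ne_of_gt ha)]
  have hΔT_eq : ΔT = Real.log b - Real.log (q - ε) := by
    rw [hΔT, Real.log_div (ne_of_gt hb) (ne_of_gt hb')]
  have hd : 0 < d := by
    have h1 : Real.log ((q - ε)/b) < (q - ε)/b - 1 := by
      apply Real.log_lt_sub_one_of_pos (div_pos hb' hb)
      intro h
      rw [div_eq_one_iff_eq (ne_of_gt hb)] at h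
      rw [hb_def] at h; linarith
    have h2 : Real.log ((p + ε)/a) < (p + ε)/a - 1 := by
      apply Real.log_lt_sub_one_of_pos (div_pos ha' ha)
      intro h
      rw [div_eq_one_iff_eq (ne_of_gt ha)] at h
      rw [ha_def] at h; linarith
    rw [Real.log_div (ne_of_gt hb') (ne_of_gt hb)] at h1
    rw [Real.log_div (ne_of_gt ha') (ne_of_gt ha)] at h2
    have h1' : b * (Real.log (q - ε) - Real.log b) < b * ((q - ε)/b - 1) :=
      mul_lt_mul_of_pos_left h1 hb
    have h2' : a * (Real.log (p + ε) - Real.log a) < a * ((p + ε)/a - 1) :=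
      mul_lt_mul_of_pos_left h2 ha
    have e1 : b * ((q - ε)/b - 1) = (q - ε) - b := by field_simp
    have e2 : a * ((p + ε)/a - 1) = (p + ε) - a := by field_simp
    rw [e1] at h1'
    rw [e2] at h2'
    have hqe : (q - ε) - b = -(2*ε) := by rw [hb_def]; ring
    have hpe : (p + ε) - a = 2*ε := by rw [ha_def]; ring
    rw [hd_def, hΔH_eq, hΔT_eq]
    nlinarith
  -- almost sure two-valuedness
  have hne : ΔH ≠ -ΔT := by intro h; linarith
  have hGae : ∀ᵐ ω ∂P, ∀ i, X i ω = ΔH ∨ X i ω = -ΔT := by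
    rw [ae_all_iff]
    intro i
    have hm1 : MeasurableSet {ω | X i ω = ΔH} := (hXmeas i) (measurableSet_singleton ΔH)
    have hm2 : MeasurableSet {ω | X i ω = -ΔT} := (hXmeas i) (measurableSet_singleton (-ΔT))
    have hdisj : Disjoint {ω | X i ω = ΔH} {ω | X i ω = -ΔT} := by
      rw [Set.disjoint_left]
      intro ω h1 h2
      simp only [Set.mem_setOf_eq] at h1 h2
      exact hne (h1 ▸ h2 ▸ rfl)
    have hunion : P ({ω | X i ω = ΔH} ∪ {ω | X i ω = -ΔT}) = 1 := by
      rw [measure_union hdisj hm2, hXup i, hXdown i,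
        ← ENNReal.ofReal_add (le_of_lt ha) (le_of_lt hb), hab]
      simp
    have hcompl : P ({ω | X i ω = ΔH} ∪ {ω | X i ω = -ΔT})ᶜ = 0 := by
      rw [measure_compl (hm1.union hm2) (measure_ne_top P _), hunion, measure_univ]
      simp
    have hseteq : {ω | ¬ (X i ω = ΔH ∨ X i ω = -ΔT)}
        = ({ω | X i ω = ΔH} ∪ {ω | X i ω = -ΔT})ᶜ := by
      ext ω; simp [Set.mem_union]
    rw [ae_iff, hseteq]
    exact hcompl
  -- the "not yet absorbed at time n" events
  set Asets : ℕ → Set Ω := fun n => {ω | ∀ k, 1 ≤ k → k ≤ n → S k ω ∈ Set.Ico 0 B}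
    with hAdef
  have hAmeas' : ∀ n, MeasurableSet[⨆ i ∈ {i : ℕ | i < n},
      MeasurableSpace.comap (X i) inferInstance] (Asets n) := by
    intro n
    set m' := ⨆ i ∈ {i : ℕ | i < n}, MeasurableSpace.comap (X i) inferInstance with hm'
    have hXm : ∀ i < n, Measurable[m'] (X i) := by
      intro i hi
      apply Measurable.of_comap_le
      rw [hm']
      exact le_iSup₂ (f := fun (i : ℕ) (_ : i ∈ {i : ℕ | i < n}) =>
        MeasurableSpace.comap (X i) inferInstance) i hi
    have hSm : ∀ k ≤ n, Measurable[m'] (S k) := by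
      intro k hk
      have : S k = fun ω => ∑ i ∈ Finset.range k, X i ω := funext fun ω => hS k ω
      rw [this]
      exact Finset.measurable_sum _
        (fun i hi => hXm i (lt_of_lt_of_le (Finset.mem_range.mp hi) hk))
    have hset : Asets n = ⋂ k ∈ Finset.Icc 1 n, (S k) ⁻¹' (Set.Ico 0 B) := by
      ext ω
      simp only [hAdef, Set.mem_setOf_eq, Set.mem_iInter, Set.mem_preimage, Finset.mem_Icc,
        and_imp]
    rw [hset]
    exact MeasurableSet.biInter (Finset.Icc 1 n).countable_toSet
      (fun k hk => (hSm k (Finset.mem_Icc.mp hk).2) measurableSet_Ico)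
  have hcomap_le : ∀ i : ℕ, MeasurableSpace.comap (X i) inferInstance ≤ ‹MeasurableSpace Ω› :=
    fun i => (hXmeas i).comap_le
  have hAmeas : ∀ n, MeasurableSet (Asets n) := by
    intro n
    have hle : (⨆ i ∈ {i : ℕ | i < n}, MeasurableSpace.comap (X i) inferInstance)
        ≤ ‹MeasurableSpace Ω› := by
      apply iSup_le; intro i; apply iSup_le; intro _; exact hcomap_le i
    exact hle _ (hAmeas' n)
  -- independence of Asets n from X n
  have hindep : ∀ (n : ℕ) (c : ℝ),
      P (Asets n ∩ X n ⁻¹' {c}) = P (Asets n) * P (X n ⁻¹' {c}) := by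
    intro n c
    have hdisjST : Disjoint {i : ℕ | i < n} ({n} : Set ℕ) := by
      rw [Set.disjoint_left]
      intro i hi hi'
      simp only [Set.mem_setOf_eq] at hi
      simp only [Set.mem_singleton_iff] at hi'
      omega
    have hI : Indep (⨆ i ∈ {i : ℕ | i < n}, MeasurableSpace.comap (X i) inferInstance)
        (⨆ i ∈ ({n} : Set ℕ), MeasurableSpace.comap (X i) inferInstance) P :=
      indep_iSup_of_disjoint hcomap_le hXindep.iIndep hdisjST
    refine (Indep_iff _ _ _).mp hI _ _ (hAmeas' n) ?_
    have h1 : MeasurableSet[MeasurableSpace.comap (X n) inferInstance] (X n ⁻¹' {c}) :=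
      ⟨{c}, measurableSet_singleton c, rfl⟩
    have h2 : MeasurableSpace.comap (X n) inferInstance
        ≤ ⨆ i ∈ ({n} : Set ℕ), MeasurableSpace.comap (X i) inferInstance :=
      le_iSup₂ (f := fun (i : ℕ) (_ : i ∈ ({n} : Set ℕ)) =>
        MeasurableSpace.comap (X i) inferInstance) n rfl
    exact h2 _ h1
  -- the survival probabilities
  set αE : ℕ → ENNReal := fun n => P (Asets n) with hαEdef
  set α : ℕ → ℝ := fun n => (αE n).toReal with hαdef
  have hαE_ne_top : ∀ n, αE n ≠ ⊤ := fun n => (measure_lt_top P _).ne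
  have hαE_eq : ∀ n, αE n = ENNReal.ofReal (α n) := fun n =>
    (ENNReal.ofReal_toReal (hαE_ne_top n)).symm
  have hα_nonneg : ∀ n, 0 ≤ α n := fun n => ENNReal.toReal_nonneg
  -- integrability and expectation of each indicator increment
  have hfmeas : ∀ n, Measurable ((Asets n).indicator (X n)) :=
    fun n => (hXmeas n).indicator (hAmeas n)
  have hfint : ∀ n, Integrable ((Asets n).indicator (X n)) P := by
    intro n
    apply Integrable.mono' (integrable_const (ΔH + ΔT)) (hfmeas n).aestronglyMeasurable
    filter_upwards [hGae] with ω hω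
    rw [Set.indicator_apply, Real.norm_eq_abs]
    by_cases hωA : ω ∈ Asets n
    · rw [if_pos hωA]
      rcases hω n with h | h <;> rw [h]
      · rw [abs_of_pos hΔHpos]; linarith
      · rw [abs_neg, abs_of_pos hΔTpos]; linarith
    · rw [if_neg hωA, abs_zero]; linarith
  have hfeq : ∀ n, ∫ ω, (Asets n).indicator (X n) ω ∂P = (ΔH * a - ΔT * b) * α n := by
    intro n
    have hmH : MeasurableSet (X n ⁻¹' {ΔH}) := (hXmeas n) (measurableSet_singleton _)
    have hmT : MeasurableSet (X n ⁻¹' {-ΔT}) := (hXmeas n) (measurableSet_singleton _)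
    have haeeq : (Asets n).indicator (X n)
        =ᵐ[P] fun ω => (Asets n ∩ X n ⁻¹' {ΔH}).indicator (fun _ => ΔH) ω
          + (Asets n ∩ X n ⁻¹' {-ΔT}).indicator (fun _ => -ΔT) ω := by
      filter_upwards [hGae] with ω hω
      rw [Set.indicator_apply]
      by_cases hωA : ω ∈ Asets n
      · rw [if_pos hωA]
        rcases hω n with h | h
        · have h1 : ω ∈ Asets n ∩ X n ⁻¹' {ΔH} := Set.mem_inter hωA (by simp [h])
          have h2 : ω ∉ Asets n ∩ X n ⁻¹' {-ΔT} := by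
            intro hc
            have hx : X n ω = -ΔT := hc.2
            rw [h] at hx; exact hne hx
          rw [Set.indicator_of_mem h1, Set.indicator_of_notMem h2, add_zero, h]
        · have h1 : ω ∉ Asets n ∩ X n ⁻¹' {ΔH} := by
            intro hc
            have hx : X n ω = ΔH := hc.2
            rw [h] at hx; exact hne hx.symm
          have h2 : ω ∈ Asets n ∩ X n ⁻¹' {-ΔT} := Set.mem_inter hωA (by simp [h])
          rw [Set.indicator_of_notMem h1, Set.indicator_of_mem h2, zero_add, h]
      · rw [if_neg hωA,
          Set.indicator_of_notMem (fun hc => hωA hc.1),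
          Set.indicator_of_notMem (fun hc => hωA hc.1), add_zero]
    rw [integral_congr_ae haeeq]
    rw [integral_add ((integrable_const ΔH).indicator ((hAmeas n).inter hmH))
      ((integrable_const (-ΔT)).indicator ((hAmeas n).inter hmT))]
    rw [integral_indicator_const _ ((hAmeas n).inter hmH),
      integral_indicator_const _ ((hAmeas n).inter hmT)]
    have hPH : P (X n ⁻¹' {ΔH}) = ENNReal.ofReal a := hXup n
    have hPT : P (X n ⁻¹' {-ΔT}) = ENNReal.ofReal b := hXdown n
    rw [measureReal_def, measureReal_def]
    rw [hindep n ΔH, hindep n (-ΔT), hPH, hPT]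
    rw [ENNReal.toReal_mul, ENNReal.toReal_mul,
      ENNReal.toReal_ofReal (le_of_lt ha), ENNReal.toReal_ofReal (le_of_lt hb)]
    show ((P (Asets n)).toReal * a) • ΔH + ((P (Asets n)).toReal * b) • (-ΔT)
      = (ΔH * a - ΔT * b) * α n
    simp only [smul_eq_mul, hαdef, hαEdef]
    ring
  -- Wald-type bound on partial sums of survival probabilities
  have hsum_le : ∀ N, ∑ n ∈ Finset.range N, α n ≤ ΔT / d := by
    intro N
    have hTle : ∀ᵐ ω ∂P, -ΔT ≤ ∑ n ∈ Finset.range N, (Asets n).indicator (X n) ω := by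
      filter_upwards [hGae] with ω hω
      obtain ⟨m, hmN, hall, hsum⟩ := aux_sum_if (fun n => ω ∈ Asets n)
        (fun n h => fun k hk1 hk2 => h k hk1 (le_trans hk2 (Nat.le_succ n)))
        (fun n => X n ω) N
      have heq : ∑ n ∈ Finset.range N, (Asets n).indicator (X n) ω
          = ∑ n ∈ Finset.range m, X n ω := by
        rw [← hsum]
        apply Finset.sum_congr rfl
        intro n _
        by_cases h : ω ∈ Asets n <;> simp [Set.indicator_apply, h]
      rw [heq, ← hS m ω]
      cases m with
      | zero =>
        rw [hS]
        simp only [Finset.sum_range_zero]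
        linarith
      | succ j =>
        have hstep : S (j+1) ω = S j ω + X j ω := by
          rw [hS, hS, Finset.sum_range_succ]
        have hSj : 0 ≤ S j ω := by
          cases j with
          | zero => rw [hS]; simp
          | succ i =>
            exact ((hall (i+1) (by omega)) (i+1) (by omega) (le_refl _)).1
        have hXj : -ΔT ≤ X j ω := by
          rcases hω j with h | h <;> rw [h] <;> linarith
        linarith
    have hint : Integrable (fun ω => ∑ n ∈ Finset.range N, (Asets n).indicator (X n) ω) P :=
      integrable_finset_sum _ (fun n _ => hfint n)
    have h1 : (-ΔT : ℝ) ≤ ∫ ω, ∑ n ∈ Finset.range N, (Asets n).indicator (X n) ω ∂P := by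
      calc (-ΔT : ℝ) = ∫ _, (-ΔT : ℝ) ∂P := by simp
      _ ≤ _ := integral_mono_ae (integrable_const _) hint hTle
    rw [integral_finset_sum _ (fun n _ => hfint n)] at h1
    simp_rw [hfeq] at h1
    rw [← Finset.mul_sum] at h1
    have hcoef : ΔH * a - ΔT * b = -d := by rw [hd_def]; ring
    rw [hcoef] at h1
    rw [le_div_iff₀ hd]
    nlinarith
  -- identify the sInf expression with the tsum of survival indicators
  have hmem : ∀ ω n, ω ∈ Asets n ↔ ∀ k ∈ hit ω, n < k := by
    intro ω n
    constructor
    · intro h k hk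
      rw [hhit] at hk
      obtain ⟨hk1, hk2⟩ := hk
      by_contra hcon
      push_neg at hcon
      have := h k hk1 hcon
      rw [Set.mem_Ico] at this
      rcases hk2 with h' | h' <;> linarith [this.1, this.2]
    · intro h k hk1 hk2
      have hknot : k ∉ hit ω := fun hc => absurd (h k hc) (by omega)
      rw [hhit] at hknot
      simp only [Set.mem_setOf_eq, not_and, not_or, not_le, not_lt] at hknot
      have := hknot hk1
      rw [Set.mem_Ico]
      exact ⟨this.2, this.1⟩
  have hptwise : ∀ ω, (if (hit ω).Nonempty then ((sInf (hit ω) : ℕ) : ENNReal) else ⊤)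
      = ∑' n, (Asets n).indicator (fun _ => (1:ENNReal)) ω := by
    intro ω
    by_cases hne' : (hit ω).Nonempty
    · rw [if_pos hne']
      have hm := Nat.sInf_mem hne'
      have hiff : ∀ n, ω ∈ Asets n ↔ n < sInf (hit ω) := by
        intro n
        rw [hmem]
        constructor
        · intro h; exact h _ hm
        · intro h k hk; exact lt_of_lt_of_le h (Nat.sInf_le hk)
      have : ∀ n, (Asets n).indicator (fun _ => (1:ENNReal)) ω
          = if n < sInf (hit ω) then 1 else 0 := by
        intro n
        rw [Set.indicator_apply]
        by_cases h : ω ∈ Asets n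
        · rw [if_pos h, if_pos ((hiff n).mp h)]
        · rw [if_neg h, if_neg (fun hc => h ((hiff n).mpr hc))]
      rw [tsum_congr this, aux_tsum_if]
    · rw [if_neg hne']
      have : ∀ n, (Asets n).indicator (fun _ => (1:ENNReal)) ω = 1 := by
        intro n
        exact Set.indicator_of_mem ((hmem ω n).mpr (fun k hk => absurd ⟨k, hk⟩ hne')) _
      rw [tsum_congr this]
      exact (ENNReal.tsum_const_eq_top_of_ne_zero one_ne_zero).symm
  calc (∫⁻ ω, (if (hit ω).Nonempty then ((sInf (hit ω) : ℕ) : ENNReal) else ⊤) ∂P)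
      = ∑' n, αE n := by
        rw [lintegral_congr hptwise,
          lintegral_tsum (fun n => (measurable_const.indicator (hAmeas n)).aemeasurable)]
        exact tsum_congr (fun n => lintegral_indicator_one (hAmeas n))
    _ ≤ ENNReal.ofReal (ΔT / d) := by
        rw [ENNReal.tsum_eq_iSup_sum]
        apply iSup_le
        intro s
        obtain ⟨N, hsub⟩ := s.exists_nat_subset_range
        calc ∑ n ∈ s, αE n ≤ ∑ n ∈ Finset.range N, αE n :=
              Finset.sum_le_sum_of_subset hsub
          _ = ENNReal.ofReal (∑ n ∈ Finset.range N, α n) := by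
              rw [ENNReal.ofReal_sum_of_nonneg (fun n _ => hα_nonneg n)]
              exact Finset.sum_congr rfl (fun n _ => hαE_eq n)
          _ ≤ ENNReal.ofReal (ΔT / d) := ENNReal.ofReal_le_ofReal (hsum_le N)
    _ ≤ ENNReal.ofReal (2 * (ΔH + ΔT) / d) := by
        apply ENNReal.ofReal_le_ofReal
        exact (div_le_div_iff_of_pos_right hd).mpr (by linarith)
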